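/- Let a_n, a_m, b_n, b_m : ℝ → ℝ be C¹ with b_n(θ)·b_m(θ) ≠ 0 for all θ ∈ ℝ. Suppose r : ℝ → ℝ is differentiable and satisfies r'(θ) = (a_n(θ)r(θ) + a_m(θ)r(θ)²)/(b_n(θ) + b_m(θ)r(θ)) with b_n(θ) + b_m(θ)r(θ) ≠ 0 for all θ. Define ρ(τ) = b_m(2πτ)·r(2πτ)/(b_n(2πτ) + b_m(2πτ)·r(2πτ)). Then ρ'(τ) = α₃(2πτ)ρ(τ)³ + α₂(2πτ)ρ(τ)² + α₁(2πτ)ρ(τ) for all τ, where α₃(θ) = 2π(a_n(θ)b_m(θ) − a_m(θ)b_n(θ))/(b_n(θ)b_m(θ)), α₂(θ) = 2π(a_m(θ)b_n(θ) − 2a_n(θ)b_m(θ) + W(b_m,b_n)(θ))/(b_n(θ)b_m(θ)), α₁(θ) = 2π(a_n(θ)b_m(θ) − W(b_m,b_n)(θ))/(b_n(θ)b_m(θ)). -/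

import Mathlib

/-- the Cherkas transformation `ρ = bₘ(θ)r/(bₙ(θ) + bₘ(θ)r)`, `θ = 2πτ`
turns a solution of the generalized-polar equation
`dr/dθ = (aₙ(θ)r + aₘ(θ)r²)/(bₙ(θ) + bₘ(θ)r)` into a solution of the Abel equation
`dρ/dτ = α₃(2πτ)ρ³ + α₂(2πτ)ρ² + α₁(2πτ)ρ`. -/
theorem stmt_14 (an am bn bm : ℝ → ℝ)
    (han : ContDiff ℝ 1 an) (ham : ContDiff ℝ 1 am)
    (hbn : ContDiff ℝ 1 bn) (hbm : ContDiff ℝ 1 bm)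
    (hbnbm : ∀ θ : ℝ, bn θ * bm θ ≠ 0)
    (r : ℝ → ℝ)
    (hden : ∀ θ : ℝ, bn θ + bm θ * r θ ≠ 0)
    (hr : ∀ θ : ℝ, HasDerivAt r
      ((an θ * r θ + am θ * (r θ) ^ 2) / (bn θ + bm θ * r θ)) θ)
    (ρ : ℝ → ℝ)
    (hρ : ∀ τ : ℝ, ρ τ = bm (2 * Real.pi * τ) * r (2 * Real.pi * τ)
      / (bn (2 * Real.pi * τ) + bm (2 * Real.pi * τ) * r (2 * Real.pi * τ)))
    (α₁ α₂ α₃ : ℝ → ℝ)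
    (hα₃ : ∀ θ : ℝ, α₃ θ = 2 * Real.pi * (an θ * bm θ - am θ * bn θ) / (bn θ * bm θ))
    (hα₂ : ∀ θ : ℝ, α₂ θ = 2 * Real.pi *
      (am θ * bn θ - 2 * an θ * bm θ + (bm θ * deriv bn θ - deriv bm θ * bn θ))
        / (bn θ * bm θ))
    (hα₁ : ∀ θ : ℝ, α₁ θ = 2 * Real.pi *
      (an θ * bm θ - (bm θ * deriv bn θ - deriv bm θ * bn θ)) / (bn θ * bm θ)) :
    ∀ τ : ℝ, HasDerivAt ρ
      (α₃ (2 * Real.pi * τ) * (ρ τ) ^ 3 + α₂ (2 * Real.pi * τ) * (ρ τ) ^ 2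
        + α₁ (2 * Real.pi * τ) * ρ τ) τ := by
  have hρfun : ρ = fun τ => bm (2 * Real.pi * τ) * r (2 * Real.pi * τ)
      / (bn (2 * Real.pi * τ) + bm (2 * Real.pi * τ) * r (2 * Real.pi * τ)) := funext hρ
  intro τ
  set θ := 2 * Real.pi * τ with hθdef
  have hbn0 : bn θ ≠ 0 := fun h => hbnbm θ (by rw [h]; ring)
  have hbm0 : bm θ ≠ 0 := fun h => hbnbm θ (by rw [h]; ring)
  have hv : bn θ + bm θ * r θ ≠ 0 := hden θ
  have hbnd : HasDerivAt bn (deriv bn θ) θ :=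
    ((hbn.differentiable one_ne_zero) θ).hasDerivAt
  have hbmd : HasDerivAt bm (deriv bm θ) θ :=
    ((hbm.differentiable one_ne_zero) θ).hasDerivAt
  have hrd := hr θ
  have hg : HasDerivAt (fun t => bm t * r t / (bn t + bm t * r t))
      (((deriv bm θ * r θ + bm θ * ((an θ * r θ + am θ * (r θ) ^ 2) / (bn θ + bm θ * r θ)))
          * (bn θ + bm θ * r θ)
        - bm θ * r θ *
          (deriv bn θ + (deriv bm θ * r θ + bm θ * ((an θ * r θ + am θ * (r θ) ^ 2) / (bn θ + bm θ * r θ)))))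
        / (bn θ + bm θ * r θ) ^ 2) θ :=
    (hbmd.mul hrd).div (hbnd.add (hbmd.mul hrd)) hv
  have hlin : HasDerivAt (fun τ : ℝ => 2 * Real.pi * τ) (2 * Real.pi) τ := by
    simpa using (hasDerivAt_id τ).const_mul (2 * Real.pi)
  have hcomp : HasDerivAt (fun τ : ℝ => bm (2 * Real.pi * τ) * r (2 * Real.pi * τ)
      / (bn (2 * Real.pi * τ) + bm (2 * Real.pi * τ) * r (2 * Real.pi * τ))) _ τ := hg.comp τ hlin
  rw [hρfun]
  convert hcomp using 1
  rw [hα₁, hα₂, hα₃]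
  simp only [← hθdef]
  field_simp
  ring
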